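/- Let k ≥ 2 be fixed, let n be sufficiently large, and let q ≥ 2^{k/2} e^{k/2+1} k · binom(n,k)/n. Then Σ_{t=k}^{n} binom(n,t) · binom(binom(t,k), 2t/k) · q^{-2t/k} < 1, where 2t/k is interpreted as ⌈2t/k⌉ (or the sum is over sets of edges of size exactly 2t/k when k divides 2t). -/

import Mathlib

set_option maxHeartbeats 1000000


open Real

private lemma wc_choose_le_epow (N m : ℕ) (hm : 1 ≤ m) :
    ((N.choose m : ℕ) : ℝ) ≤ (Real.exp 1 * N / m) ^ m := by
  have hm0 : (0:ℝ) < m := by exact_mod_cast hm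
  have hf : (0:ℝ) < (m.factorial : ℝ) := by exact_mod_cast m.factorial_pos
  have hA : ((N.choose m : ℕ) : ℝ) ≤ (N:ℝ)^m / (m.factorial : ℝ) := by
    have := Nat.choose_le_pow_div (α := ℝ) m N
    push_cast at this ⊢
    exact this
  have hB : (m:ℝ)^m ≤ Real.exp 1 ^ m * (m.factorial : ℝ) := by
    have h := Real.pow_div_factorial_le_exp (x := (m:ℝ)) (by positivity) m
    rw [div_le_iff₀ hf] at h
    calc (m:ℝ)^m ≤ Real.exp m * (m.factorial : ℝ) := h
      _ = Real.exp 1 ^ m * (m.factorial : ℝ) := by rw [Real.exp_one_pow]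
  calc ((N.choose m : ℕ) : ℝ) ≤ (N:ℝ)^m / (m.factorial : ℝ) := hA
    _ ≤ (Real.exp 1 * N / m)^m := by
        rw [div_pow, mul_pow, div_le_div_iff₀ hf (by positivity)]
        calc (N:ℝ)^m * (m:ℝ)^m ≤ (N:ℝ)^m * (Real.exp 1 ^ m * (m.factorial : ℝ)) := by
              exact mul_le_mul_of_nonneg_left hB (by positivity)
          _ = Real.exp 1 ^ m * (N:ℝ)^m * (m.factorial : ℝ) := by ring

private lemma wc_desc_mul_pow_le (k : ℕ) : ∀ t n : ℕ, t ≤ n →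
    t.descFactorial k * n ^ k ≤ n.descFactorial k * t ^ k := by
  induction k with
  | zero => simp
  | succ k ih =>
    intro t n h
    rw [Nat.descFactorial_succ, Nat.descFactorial_succ, pow_succ, pow_succ]
    have h1 := ih t n h
    have h2 : (t - k) * n ≤ (n - k) * t := by
      rw [Nat.sub_mul, Nat.sub_mul]
      have hkt : k * t ≤ k * n := Nat.mul_le_mul_left k h
      have hc : t * n = n * t := Nat.mul_comm t n
      omega
    calc (t - k) * t.descFactorial k * (n ^ k * n)
        = ((t - k) * n) * (t.descFactorial k * n ^ k) := by ring
      _ ≤ ((n - k) * t) * (n.descFactorial k * t ^ k) := Nat.mul_le_mul h2 h1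
      _ = (n - k) * n.descFactorial k * (t ^ k * t) := by ring

private lemma wc_choose_mul_pow_le (k t n : ℕ) (h : t ≤ n) :
    t.choose k * n ^ k ≤ n.choose k * t ^ k := by
  have hd := wc_desc_mul_pow_le k t n h
  rw [Nat.descFactorial_eq_factorial_mul_choose, Nat.descFactorial_eq_factorial_mul_choose] at hd
  have hk : 0 < k.factorial := Nat.factorial_pos k
  refine Nat.le_of_mul_le_mul_left ?_ hk
  calc k.factorial * (t.choose k * n ^ k) = k.factorial * t.choose k * n ^ k := by ring
    _ ≤ k.factorial * n.choose k * t ^ k := hd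
    _ = k.factorial * (n.choose k * t ^ k) := by ring

private lemma wc_term_bound (k t n q : ℕ) (hk : 2 ≤ k) (ht : k ≤ t) (htn : t ≤ n) (hq : 0 < q)
    (hQ : (2 : ℝ) ^ ((k : ℝ) / 2) * Real.exp ((k : ℝ) / 2 + 1) * k * (n.choose k : ℝ) / n
        ≤ (q : ℝ)) :
    (n.choose t : ℝ) * (((t.choose k).choose ((2 * t + k - 1) / k)) : ℝ) *
      (q : ℝ) ^ (-(((2 * t + k - 1) / k : ℕ) : ℝ)) ≤ (1/4) * (1/2 : ℝ) ^ t := by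
  set E : ℝ := Real.exp 1 with hE
  set P : ℝ := (2:ℝ) ^ ((k:ℝ)/2) * Real.exp ((k:ℝ)/2) with hPdef
  set m : ℕ := (2 * t + k - 1) / k with hmdef
  have hk0 : 0 < k := by omega
  have ht0n : 0 < t := by omega
  have hn0n : 0 < n := by omega
  -- nat facts about m
  have hdm := Nat.div_add_mod (2 * t + k - 1) k
  have hmod := Nat.mod_lt (2 * t + k - 1) hk0
  rw [← hmdef] at hdm
  have hkm : 2 * t ≤ k * m := by omega
  have hm2 : 2 ≤ m := by
    have h2k : k * 2 ≤ k * m := by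
      have : 2 * k ≤ 2 * t := by omega
      omega
    exact Nat.le_of_mul_le_mul_left h2k hk0
  have hmt : m ≤ t := by
    by_contra hcon
    push_neg at hcon
    have h1 : k * (t + 1) ≤ k * m := Nat.mul_le_mul_left k hcon
    have h2 : 2 * t ≤ k * t := Nat.mul_le_mul_right t hk
    have h3 : k * (t+1) = k * t + k := by ring
    omega
  have htkm : t ≤ (k - 1) * m := by
    have h1 : (k - 1) * m = k * m - m := by rw [Nat.sub_one_mul]
    omega
  -- real facts
  have ht0 : (0:ℝ) < t := by exact_mod_cast ht0n
  have hn0 : (0:ℝ) < n := by exact_mod_cast hn0n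
  have hq0 : (0:ℝ) < q := by exact_mod_cast hq
  have hm0 : (0:ℝ) < m := by exact_mod_cast (by omega : 0 < m)
  have hE0 : (0:ℝ) < E := Real.exp_pos 1
  have hE1 : (1:ℝ) ≤ E := Real.one_le_exp (by norm_num)
  have hP0 : (0:ℝ) < P := by
    rw [hPdef]; positivity
  have hr0 : (0:ℝ) ≤ (t:ℝ)/n := by positivity
  have hr1 : (t:ℝ)/n ≤ 1 := by
    rw [div_le_one hn0]; exact_mod_cast htn
  have hkm' : 2 * (t:ℝ) ≤ (k:ℝ) * m := by exact_mod_cast hkm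
  -- choose bounds
  have hA : (n.choose t : ℝ) ≤ (E * n / t) ^ t := wc_choose_le_epow n t (by omega)
  have hB : (((t.choose k).choose m) : ℝ) ≤ (E * (t.choose k) / m) ^ m :=
    wc_choose_le_epow (t.choose k) m (by omega)
  have h1 : ((t.choose k) : ℝ) ≤ ((t:ℝ)/n) ^ k * (n.choose k : ℝ) := by
    have hCnat := wc_choose_mul_pow_le k t n htn
    have hc : ((t.choose k):ℝ) * (n:ℝ)^k ≤ ((n.choose k):ℝ) * (t:ℝ)^k := by
      exact_mod_cast hCnat
    rw [div_pow, div_mul_eq_mul_div, le_div_iff₀ (by positivity : (0:ℝ) < (n:ℝ)^k)]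
    nlinarith [hc]
  have hqpow : (q:ℝ) ^ (-((m:ℕ):ℝ)) = (((q:ℝ)^m))⁻¹ := by
    rw [Real.rpow_neg hq0.le, Real.rpow_natCast]
  -- lower bound on q
  have hQ' : P * E * k * (n.choose k : ℝ) / n ≤ (q:ℝ) := by
    have heq : P * E * k * (n.choose k : ℝ) / n
        = (2:ℝ) ^ ((k:ℝ)/2) * Real.exp ((k:ℝ)/2 + 1) * k * (n.choose k : ℝ) / n := by
      rw [hPdef, hE, Real.exp_add]; ring
    rw [heq]; exact hQ
  -- key inequality
  have key : E * ((t.choose k) : ℝ)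
      ≤ (((t:ℝ)/n) ^ (k-1) * ((1/2) * P⁻¹)) * ((m:ℝ) * (P * E * k * (n.choose k : ℝ) / n)) := by
    have hrw : (((t:ℝ)/n) ^ (k-1) * ((1/2) * P⁻¹)) * ((m:ℝ) * (P * E * k * (n.choose k : ℝ) / n))
        = ((t:ℝ)/n) ^ (k-1) * (((k:ℝ) * m) / (2 * n)) * (E * (n.choose k : ℝ)) := by
      field_simp
    rw [hrw]
    have hpow : ((t:ℝ)/n) ^ k = ((t:ℝ)/n) ^ (k-1) * ((t:ℝ)/n) := by
      rw [← pow_succ]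
      congr 1
      omega
    have h2 : (t:ℝ)/n ≤ ((k:ℝ) * m) / (2 * n) := by
      rw [div_le_div_iff₀ hn0 (by positivity)]
      nlinarith [hkm', hn0]
    calc E * ((t.choose k) : ℝ) ≤ E * (((t:ℝ)/n) ^ k * (n.choose k : ℝ)) :=
          mul_le_mul_of_nonneg_left h1 hE0.le
      _ = ((t:ℝ)/n) ^ (k-1) * ((t:ℝ)/n) * (E * (n.choose k : ℝ)) := by rw [hpow]; ring
      _ ≤ ((t:ℝ)/n) ^ (k-1) * (((k:ℝ) * m) / (2 * n)) * (E * (n.choose k : ℝ)) := by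
          apply mul_le_mul_of_nonneg_right _ (by positivity)
          exact mul_le_mul_of_nonneg_left h2 (by positivity)
  have hR : E * ((t.choose k) : ℝ) / ((m:ℝ) * q) ≤ ((t:ℝ)/n) ^ (k-1) * ((1/2) * P⁻¹) := by
    rw [div_le_iff₀ (by positivity)]
    calc E * ((t.choose k) : ℝ)
        ≤ (((t:ℝ)/n) ^ (k-1) * ((1/2) * P⁻¹)) * ((m:ℝ) * (P * E * k * (n.choose k : ℝ) / n)) := key
      _ ≤ (((t:ℝ)/n) ^ (k-1) * ((1/2) * P⁻¹)) * ((m:ℝ) * q) := by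
          apply mul_le_mul_of_nonneg_left _ (by positivity)
          exact mul_le_mul_of_nonneg_left hQ' hm0.le
  -- bound on P^m
  have hPm : ((2*E) ^ t : ℝ) ≤ P ^ m := by
    have hP2E : P = (2*E) ^ ((k:ℝ)/2) := by
      rw [Real.mul_rpow (by norm_num) hE0.le, Real.exp_one_rpow, hPdef]
    rw [hP2E, ← Real.rpow_natCast ((2*E) ^ ((k:ℝ)/2)) m, ← Real.rpow_mul (by positivity),
      ← Real.rpow_natCast (2*E) t]
    apply Real.rpow_le_rpow_of_exponent_le (by linarith)
    nlinarith [hkm']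
  have hfac : (E * ((t.choose k):ℝ) / ((m:ℝ) * q)) ^ m
      = (E * ((t.choose k):ℝ) / m) ^ m * (((q:ℝ)^m))⁻¹ := by
    rw [← div_div, div_pow (E * ((t.choose k):ℝ) / m), div_eq_mul_inv]
  have hbase : (E * (n:ℝ) / t) * ((t:ℝ)/n) * (2*E)⁻¹ = 1/2 := by
    field_simp
  calc (n.choose t : ℝ) * (((t.choose k).choose m) : ℝ) * (q : ℝ) ^ (-((m:ℕ) : ℝ))
      = (n.choose t : ℝ) * (((t.choose k).choose m) : ℝ) * (((q:ℝ)^m))⁻¹ := by rw [hqpow]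
    _ ≤ (E * n / t) ^ t * (E * ((t.choose k):ℝ) / m) ^ m * (((q:ℝ)^m))⁻¹ := by
        apply mul_le_mul_of_nonneg_right _ (by positivity)
        exact mul_le_mul hA hB (by positivity) (by positivity)
    _ = (E * n / t) ^ t * (E * ((t.choose k):ℝ) / ((m:ℝ) * q)) ^ m := by
        rw [hfac]; ring
    _ ≤ (E * n / t) ^ t * (((t:ℝ)/n) ^ (k-1) * ((1/2) * P⁻¹)) ^ m := by
        apply mul_le_mul_of_nonneg_left _ (by positivity)
        exact pow_le_pow_left₀ (by positivity) hR m
    _ = (E * n / t) ^ t * (((t:ℝ)/n) ^ ((k-1)*m) * ((1/2:ℝ) ^ m * (P ^ m)⁻¹)) := by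
        rw [mul_pow, ← pow_mul, mul_pow, inv_pow]
    _ ≤ (E * n / t) ^ t * (((t:ℝ)/n) ^ t * ((1/2:ℝ) ^ 2 * (((2*E) ^ t))⁻¹)) := by
        apply mul_le_mul_of_nonneg_left _ (by positivity)
        apply mul_le_mul
        · exact pow_le_pow_of_le_one hr0 hr1 htkm
        · apply mul_le_mul
          · exact pow_le_pow_of_le_one (by norm_num) (by norm_num) hm2
          · exact inv_anti₀ (by positivity) hPm
          · positivity
          · positivity
        · positivity
        · positivity
    _ = (1/4) * (1/2:ℝ) ^ t := by
        have hsplit : (E * (n:ℝ) / t) ^ t * (((t:ℝ)/n) ^ t * ((1/2:ℝ) ^ 2 * (((2*E) ^ t))⁻¹))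
            = ((E * (n:ℝ) / t) * ((t:ℝ)/n) * (2*E)⁻¹) ^ t * (1/4) := by
          rw [mul_pow _ (2*E)⁻¹, mul_pow (E * (n:ℝ) / t), inv_pow]
          generalize ((2*E)^t)⁻¹ = X
          ring
        rw [hsplit, hbase]
        ring

/-- Potential estimate for Client's strategy in the Waiter–Client non-2-colourability game:
for fixed `k ≥ 2`, `n` sufficiently large and `q ≥ 2^{k/2} e^{k/2+1} k C(n,k)/n`,
`∑_{t=k}^{n} C(n,t) · C(C(t,k), ⌈2t/k⌉) · q^{-⌈2t/k⌉} < 1`. -/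
theorem waiterClient_noncol_client_potential (k : ℕ) (hk : 2 ≤ k) :
    ∃ n₀ : ℕ, ∀ n : ℕ, n₀ ≤ n → ∀ q : ℕ, 0 < q →
      (2 : ℝ) ^ ((k : ℝ) / 2) * Real.exp ((k : ℝ) / 2 + 1) * k * (n.choose k : ℝ) / n
        ≤ (q : ℝ) →
      ∑ t ∈ Finset.Icc k n,
        (n.choose t : ℝ) * (((t.choose k).choose ((2 * t + k - 1) / k)) : ℝ) *
          (q : ℝ) ^ (-(((2 * t + k - 1) / k : ℕ) : ℝ)) < 1 := by
  refine ⟨0, fun n _ q hq hQ => ?_⟩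
  calc ∑ t ∈ Finset.Icc k n,
        (n.choose t : ℝ) * (((t.choose k).choose ((2 * t + k - 1) / k)) : ℝ) *
          (q : ℝ) ^ (-(((2 * t + k - 1) / k : ℕ) : ℝ))
      ≤ ∑ t ∈ Finset.Icc k n, (1/4) * (1/2:ℝ) ^ t := by
        apply Finset.sum_le_sum
        intro t htmem
        obtain ⟨ht, htn⟩ := Finset.mem_Icc.mp htmem
        exact wc_term_bound k t n q hk ht htn hq hQ
    _ ≤ ∑ t ∈ Finset.range (n+1), (1/4) * (1/2:ℝ) ^ t := by
        apply Finset.sum_le_sum_of_subset_of_nonneg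
        · intro x hx
          simp only [Finset.mem_Icc, Finset.mem_range] at *
          omega
        · intro i _ _
          positivity
    _ = (1/4) * ∑ t ∈ Finset.range (n+1), (1/2:ℝ) ^ t := by rw [Finset.mul_sum]
    _ ≤ (1/4) * 2 := by
        apply mul_le_mul_of_nonneg_left (sum_geometric_two_le _) (by norm_num)
    _ < 1 := by norm_num
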